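/- Let E be a real inner product space, let g, s, y ∈ E with s ≠ 0, ⟨s, y⟩ > 0, and g, s linearly independent, and let λ > 0. Define the memoryless BFGS operator B : E → E by B(d) = (1/λ)(d − (⟨s, d⟩/‖s‖²) s) + (⟨y, d⟩/⟨s, y⟩) y, and set ρ = ⟨g, B g⟩, α = λ(‖g‖²⟨s, y⟩ − ⟨g, y⟩⟨g, s⟩)/(⟨s, y⟩(‖g‖² − ⟨g, s⟩²/‖s‖²)), and β = (α⟨g, y⟩ − ⟨g, s⟩)/⟨s, y⟩. Then (α, β) solves the 2×2 linear system: ρ·α − ⟨g, y⟩·β = ‖g‖² and −⟨g, y⟩·α + ⟨s, y⟩·β = −⟨g, s⟩. -/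

import Mathlib

open scoped RealInnerProductSpace

/-- With the memoryless BFGS operator `B`, `ρ = ⟪g, B g⟫`, and the explicit
formulae for `α` and `β`, the pair `(α, β)` solves the 2×2 optimality system
`ρ·α - ⟪g, y⟫·β = ‖g‖²`, `-⟪g, y⟫·α + ⟪s, y⟫·β = -⟪g, s⟫`. -/
theorem explicit_coefficients_solve_system
    {E : Type*} [NormedAddCommGroup E] [InnerProductSpace ℝ E]
    (g s y : E) (hs : s ≠ 0) (hsy : 0 < ⟪s, y⟫)
    (hind : LinearIndependent ℝ ![g, s])
    (lam : ℝ) (hlam : 0 < lam)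
    (B : E → E)
    (hB : ∀ d : E, B d = (1 / lam) • (d - (⟪s, d⟫ / ‖s‖ ^ 2) • s) + (⟪y, d⟫ / ⟪s, y⟫) • y)
    (ρ α β : ℝ)
    (hρ : ρ = ⟪g, B g⟫)
    (hα : α = lam * (‖g‖ ^ 2 * ⟪s, y⟫ - ⟪g, y⟫ * ⟪g, s⟫) /
      (⟪s, y⟫ * (‖g‖ ^ 2 - ⟪g, s⟫ ^ 2 / ‖s‖ ^ 2)))
    (hβ : β = (α * ⟪g, y⟫ - ⟪g, s⟫) / ⟪s, y⟫) :
    ρ * α - ⟪g, y⟫ * β = ‖g‖ ^ 2 ∧ -⟪g, y⟫ * α + ⟪s, y⟫ * β = -⟪g, s⟫ := by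
  have hsy0 : ⟪s, y⟫ ≠ 0 := ne_of_gt hsy
  have hlam0 : lam ≠ 0 := ne_of_gt hlam
  have hns : ‖s‖ ≠ 0 := norm_ne_zero_iff.mpr hs
  have hg : g ≠ 0 := by
    intro h
    exact (hind.ne_zero 0) (by simpa using h)
  -- strict Cauchy-Schwarz
  have hQ : ‖g‖ ^ 2 - ⟪g, s⟫ ^ 2 / ‖s‖ ^ 2 ≠ 0 := by
    have hlt : |⟪g, s⟫| < ‖g‖ * ‖s‖ := by
      rcases lt_or_eq_of_le (abs_real_inner_le_norm g s) with h | h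
      · exact h
      · exfalso
        have := (norm_inner_eq_norm_iff (𝕜 := ℝ) hg hs).mp (by simpa using h)
        obtain ⟨r, hr0, hr⟩ := this
        rw [linearIndependent_fin2] at hind
        exact hind.2 r⁻¹ (by simp [hr, smul_smul, inv_mul_cancel₀ hr0])
    have h2 : ⟪g, s⟫ ^ 2 < ‖g‖ ^ 2 * ‖s‖ ^ 2 := by
      have := mul_self_lt_mul_self (abs_nonneg _) hlt
      calc ⟪g, s⟫ ^ 2 = |⟪g, s⟫| * |⟪g, s⟫| := by rw [← abs_mul, abs_mul_self]; ring
        _ < ‖g‖ * ‖s‖ * (‖g‖ * ‖s‖) := this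
        _ = ‖g‖ ^ 2 * ‖s‖ ^ 2 := by ring
    have : ⟪g, s⟫ ^ 2 / ‖s‖ ^ 2 < ‖g‖ ^ 2 := by
      rw [div_lt_iff₀ (by positivity)]
      exact h2
    linarith
  set P : ℝ := ‖g‖ ^ 2 * ‖s‖ ^ 2 - ⟪g, s⟫ ^ 2 with hP
  have hns2 : (‖s‖ : ℝ) ^ 2 ≠ 0 := pow_ne_zero 2 hns
  have hPQ : ‖g‖ ^ 2 - ⟪g, s⟫ ^ 2 / ‖s‖ ^ 2 = P / ‖s‖ ^ 2 := by
    field_simp [hP]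
    exact hP.symm
  have hP0 : P ≠ 0 := by
    intro h
    apply hQ
    rw [hPQ, h, zero_div]
  have hρ' : ρ = P / (lam * ‖s‖ ^ 2) + ⟪g, y⟫ ^ 2 / ⟪s, y⟫ := by
    rw [hρ, hB]
    rw [inner_add_right, inner_smul_right, inner_smul_right, inner_sub_right,
      inner_smul_right, real_inner_self_eq_norm_sq, real_inner_comm y g,
      real_inner_comm s g]
    field_simp [hP]
    rw [hP, real_inner_comm s g]
    ring
  have hα' : α = lam * ‖s‖ ^ 2 * (‖g‖ ^ 2 * ⟪s, y⟫ - ⟪g, y⟫ * ⟪g, s⟫) / (⟪s, y⟫ * P) := by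
    rw [hα, hPQ]
    field_simp
  constructor
  · rw [hρ', hβ, hα']
    field_simp
    ring
  · rw [hβ]
    field_simp
    ring
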